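/- Let G be a group, H a normal subgroup of G of finite index, X a generating set of H, and Y a right transversal of H in G with 1 ∈ Y. Suppose there are constants L and N such that: (i) |y x y⁻¹|_X ≤ L for all x ∈ X ∪ X⁻¹ and all y ∈ Y (note y x y⁻¹ ∈ H by normality); (ii) |y a y'⁻¹|_X ≤ N for all y, y' ∈ Y and all a ∈ Y ∪ Y⁻¹ with y a y'⁻¹ ∈ H. Then X ∪ Y generates G and, setting M = max(L,N), for every h ∈ H one has |h|_{X∪Y} ≤ |h|_X ≤ M · |h|_{X∪Y}; moreover for every g ∈ G there exists h ∈ H with |h⁻¹g|_{X∪Y} ≤ 1. In particular, the inclusion map (H, d_X) → (G, d_{X∪Y}) is an H-equivariant quasi-isometry. -/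

import Mathlib

namespace Paper

variable {G : Type*} [Group G]

/-- Word length of `g` with respect to `S`: the least `n` such that `g` is a product of
`n` elements of `S ∪ S⁻¹` (with `|1|_S = 0`). -/
noncomputable def wlen (S : Set G) (g : G) : ℕ :=
  sInf {n : ℕ | ∃ l : List G, (∀ a ∈ l, a ∈ S ∨ a⁻¹ ∈ S) ∧ l.length = n ∧ l.prod = g}

/-- The word metric `d_S(g,h) = |g⁻¹h|_S`. -/
noncomputable def wdist (S : Set G) (g h : G) : ℕ := wlen S (g⁻¹ * h)

/-- `S` is a generating set of the subgroup `H`: `S ⊆ H` and `S` generates `H`. -/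
def GeneratesSubgroup (S : Set G) (H : Subgroup G) : Prop :=
  S ⊆ (H : Set G) ∧ Subgroup.closure S = H

/-- `S` is a generating set of `G`. -/
def Generates (S : Set G) : Prop := Subgroup.closure S = ⊤

/-- `(H, d_S)` is hyperbolic: the four-point condition holds on `H` for the word metric `d_S`. -/
def HyperbolicOn (H : Subgroup G) (S : Set G) : Prop :=
  ∃ δ : ℝ, 0 ≤ δ ∧ ∀ w ∈ H, ∀ x ∈ H, ∀ y ∈ H, ∀ z ∈ H,
    (wdist S w x : ℝ) + (wdist S y z : ℝ) ≤
      max ((wdist S w y : ℝ) + (wdist S x z : ℝ))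
          ((wdist S w z : ℝ) + (wdist S x y : ℝ)) + 2 * δ

/-- The left multiplication action of `K` on `(H, d_S)` is acylindrical. -/
def AcylindricalOn (H K : Subgroup G) (S : Set G) : Prop :=
  ∀ ε : ℝ, 0 < ε → ∃ R : ℝ, 0 < R ∧ ∃ N : ℕ, ∀ x ∈ H, ∀ y ∈ H,
    R ≤ (wdist S x y : ℝ) →
      {k : G | k ∈ K ∧ (wdist S (k * x) x : ℝ) ≤ ε ∧ (wdist S (k * y) y : ℝ) ≤ ε}.Finite ∧
      {k : G | k ∈ K ∧ (wdist S (k * x) x : ℝ) ≤ ε ∧ (wdist S (k * y) y : ℝ) ≤ ε}.ncard ≤ N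

/-- `X` is a largest hyperbolic generating set of the subgroup `H`. -/
def IsLargestHypGenSetOf (H : Subgroup G) (X : Set G) : Prop :=
  GeneratesSubgroup X H ∧ HyperbolicOn H X ∧
    ∀ W : Set G, GeneratesSubgroup W H → HyperbolicOn H W →
      ∃ K : ℕ, ∀ x ∈ X, wlen W x ≤ K

/-- `X` is a largest acylindrically hyperbolic generating set of the subgroup `H`. -/
def IsLargestAHGenSetOf (H : Subgroup G) (X : Set G) : Prop :=
  GeneratesSubgroup X H ∧ HyperbolicOn H X ∧ AcylindricalOn H H X ∧
    ∀ W : Set G, GeneratesSubgroup W H → HyperbolicOn H W → AcylindricalOn H H W →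
      ∃ K : ℕ, ∀ x ∈ X, wlen W x ≤ K

/-- A group is virtually cyclic if it contains a cyclic subgroup of finite index. -/
def VirtuallyCyclic (H : Type*) [Group H] : Prop :=
  ∃ C : Subgroup H, IsCyclic C ∧ C.FiniteIndex

/-- The subgroup `H` is acylindrically hyperbolic: `H` is not virtually cyclic and admits a
generating set `X` with `(H, d_X)` hyperbolic, `H ↷ (H, d_X)` acylindrical, `d_X` unbounded. -/
def AcylHypSubgroup (H : Subgroup G) : Prop :=
  ¬ VirtuallyCyclic H ∧
    ∃ X : Set G, GeneratesSubgroup X H ∧ HyperbolicOn H X ∧ AcylindricalOn H H X ∧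
      ∀ n : ℕ, ∃ x ∈ H, ∃ y ∈ H, n < wdist X x y

/-- `Y` is a right transversal of `H` in `G`: it contains exactly one element of
each right coset `Hg`. -/
def IsRightTransversal (H : Subgroup G) (Y : Set G) : Prop :=
  ∀ g : G, ∃! y, y ∈ Y ∧ g * y⁻¹ ∈ H


lemma wlen_le_of_list {S : Set G} {g : G} (l : List G)
    (hl : ∀ a ∈ l, a ∈ S ∨ a⁻¹ ∈ S) (hp : l.prod = g) : wlen S g ≤ l.length :=
  Nat.sInf_le ⟨l, hl, rfl, hp⟩

lemma exists_min_list {S : Set G} {g : G} (hg : g ∈ Subgroup.closure S) :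
    ∃ l : List G, (∀ a ∈ l, a ∈ S ∨ a⁻¹ ∈ S) ∧ l.length = wlen S g ∧ l.prod = g := by
  have hmem : g ∈ Submonoid.closure (S ∪ S⁻¹) := by
    rw [← Subgroup.closure_toSubmonoid]; exact hg
  obtain ⟨l, hl, hp⟩ := Submonoid.exists_list_of_mem_closure hmem
  have hne : {n : ℕ | ∃ l : List G, (∀ a ∈ l, a ∈ S ∨ a⁻¹ ∈ S) ∧ l.length = n ∧ l.prod = g}.Nonempty := by
    refine ⟨l.length, l, fun a ha => ?_, rfl, hp⟩
    rcases hl a ha with h | h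
    · exact Or.inl h
    · exact Or.inr (Set.mem_inv.mp h)
  obtain ⟨l', hl', hlen, hp'⟩ := Nat.sInf_mem hne
  exact ⟨l', hl', hlen, hp'⟩

lemma wlen_mul_le {S : Set G} {g₁ g₂ : G} (h₁ : g₁ ∈ Subgroup.closure S)
    (h₂ : g₂ ∈ Subgroup.closure S) : wlen S (g₁ * g₂) ≤ wlen S g₁ + wlen S g₂ := by
  obtain ⟨l₁, hl₁, hn₁, hp₁⟩ := exists_min_list h₁
  obtain ⟨l₂, hl₂, hn₂, hp₂⟩ := exists_min_list h₂
  have h := wlen_le_of_list (S := S) (l₁ ++ l₂)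
    (fun a ha => by rcases List.mem_append.mp ha with h | h; exacts [hl₁ a h, hl₂ a h])
    (by rw [List.prod_append, hp₁, hp₂])
  simpa [List.length_append, hn₁, hn₂] using h

lemma key_lemma {H : Subgroup G} (hNor : H.Normal) {X Y : Set G}
    (hXH : X ⊆ (H : Set G)) (hXcl : Subgroup.closure X = H)
    (hY : IsRightTransversal H Y) (h1Y : (1 : G) ∈ Y)
    {L N : ℕ}
    (hL : ∀ x : G, (x ∈ X ∨ x⁻¹ ∈ X) → ∀ y ∈ Y, wlen X (y * x * y⁻¹) ≤ L)
    (hN : ∀ y ∈ Y, ∀ y' ∈ Y, ∀ a : G, (a ∈ Y ∨ a⁻¹ ∈ Y) → y * a * y'⁻¹ ∈ H →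
      wlen X (y * a * y'⁻¹) ≤ N) :
    ∀ l : List G, (∀ a ∈ l, a ∈ X ∪ Y ∨ a⁻¹ ∈ X ∪ Y) →
      ∀ y ∈ Y, y * l.prod ∈ H → wlen X (y * l.prod) ≤ max L N * l.length := by
  intro l
  induction l with
  | nil =>
    intro _ y hyY hyH
    simp only [List.prod_nil, mul_one] at hyH ⊢
    have hy1 : y = 1 := by
      obtain ⟨z, _, huniq⟩ := hY 1
      have h1 := huniq y ⟨hyY, by simpa using (inv_mem hyH : y⁻¹ ∈ H)⟩
      have h2 := huniq 1 ⟨h1Y, by simpa using one_mem H⟩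
      rw [h1, ← h2]
    subst hy1
    simpa using wlen_le_of_list (S := X) [] (by simp) (by simp)
  | cons a t ih =>
    intro hmem y hyY hH
    have hta : ∀ b ∈ t, b ∈ X ∪ Y ∨ b⁻¹ ∈ X ∪ Y :=
      fun b hb => hmem b (List.mem_cons_of_mem _ hb)
    simp only [List.prod_cons] at hH ⊢
    have hcase : (a ∈ X ∨ a⁻¹ ∈ X) ∨ (a ∈ Y ∨ a⁻¹ ∈ Y) := by
      rcases hmem a ((List.mem_cons_self (a := a) (l := t))) with h | h
      · rcases h with h | h
        · exact Or.inl (Or.inl h)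
        · exact Or.inr (Or.inl h)
      · rcases h with h | h
        · exact Or.inl (Or.inr h)
        · exact Or.inr (Or.inr h)
    rcases hcase with hx | hy
    · -- a is an X-letter
      have haH : a ∈ H := by
        rcases hx with h | h
        · exact hXH h
        · simpa using (inv_mem (hXH h) : (a⁻¹)⁻¹ ∈ H)
      have hyt : y * t.prod ∈ H := by
        have hc : t.prod⁻¹ * a⁻¹ * (t.prod⁻¹)⁻¹ ∈ H := hNor.conj_mem a⁻¹ (inv_mem haH) t.prod⁻¹
        have heq : y * t.prod = (y * (a * t.prod)) * (t.prod⁻¹ * a⁻¹ * (t.prod⁻¹)⁻¹) := by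
          group
        rw [heq]; exact mul_mem hH hc
      have hIH := ih hta y hyY hyt
      have hconjH : y * a * y⁻¹ ∈ H := hNor.conj_mem a haH y
      have hconj := hL a hx y hyY
      have heq : y * (a * t.prod) = (y * a * y⁻¹) * (y * t.prod) := by group
      rw [heq]
      have hsum := wlen_mul_le (S := X)
        (by rw [hXcl]; exact hconjH) (by rw [hXcl]; exact hyt)
      calc wlen X ((y * a * y⁻¹) * (y * t.prod))
          ≤ wlen X (y * a * y⁻¹) + wlen X (y * t.prod) := hsum
        _ ≤ L + max L N * t.length := Nat.add_le_add hconj hIH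
        _ ≤ max L N + max L N * t.length := Nat.add_le_add_right (le_max_left L N) _
        _ = max L N * (t.length + 1) := by ring
        _ = max L N * (a :: t).length := by rw [List.length_cons]
    · -- a is a Y-letter
      obtain ⟨y', ⟨hy'Y, hy'H⟩, _⟩ := hY t.prod⁻¹
      have hy't : y' * t.prod ∈ H := by
        have := inv_mem hy'H
        simpa [mul_inv_rev] using this
      have hfacH : y * a * y'⁻¹ ∈ H := by
        have heq : y * a * y'⁻¹ = (y * (a * t.prod)) * (y' * t.prod)⁻¹ := by group
        rw [heq]; exact mul_mem hH (inv_mem hy't)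
      have hfac := hN y hyY y' hy'Y a hy hfacH
      have hIH := ih hta y' hy'Y hy't
      have heq : y * (a * t.prod) = (y * a * y'⁻¹) * (y' * t.prod) := by group
      rw [heq]
      have hsum := wlen_mul_le (S := X)
        (by rw [hXcl]; exact hfacH) (by rw [hXcl]; exact hy't)
      calc wlen X ((y * a * y'⁻¹) * (y' * t.prod))
          ≤ wlen X (y * a * y'⁻¹) + wlen X (y' * t.prod) := hsum
        _ ≤ N + max L N * t.length := Nat.add_le_add hfac hIH
        _ ≤ max L N + max L N * t.length := Nat.add_le_add_right (le_max_right L N) _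
        _ = max L N * (t.length + 1) := by ring
        _ = max L N * (a :: t).length := by rw [List.length_cons]

/-- Quantitative form: for a normal finite-index subgroup `H ≤ G` with generating set `X`
and a right transversal `Y ∋ 1`, bounds (i) and (ii) imply that `X ∪ Y` generates `G` and
`|h|_{X∪Y} ≤ |h|_X ≤ max L N · |h|_{X∪Y}` for `h ∈ H`, and every `g ∈ G` is at
`d_{X∪Y}`-distance at most `1` from `H`; i.e. the inclusion `(H,d_X) → (G,d_{X∪Y})` is an
`H`-equivariant quasi-isometry. -/
theorem stmt_5 {G : Type*} [Group G] (H : Subgroup G) (hNor : H.Normal) (hFI : H.FiniteIndex)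
    (X : Set G) (hX : GeneratesSubgroup X H)
    (Y : Set G) (hY : IsRightTransversal H Y) (h1Y : (1 : G) ∈ Y)
    (L N : ℕ)
    (hL : ∀ x : G, (x ∈ X ∨ x⁻¹ ∈ X) → ∀ y ∈ Y, wlen X (y * x * y⁻¹) ≤ L)
    (hN : ∀ y ∈ Y, ∀ y' ∈ Y, ∀ a : G, (a ∈ Y ∨ a⁻¹ ∈ Y) → y * a * y'⁻¹ ∈ H →
      wlen X (y * a * y'⁻¹) ≤ N) :
    Generates (X ∪ Y) ∧
      (∀ h ∈ H, wlen (X ∪ Y) h ≤ wlen X h ∧ wlen X h ≤ max L N * wlen (X ∪ Y) h) ∧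
      ∀ g : G, ∃ h ∈ H, wlen (X ∪ Y) (h⁻¹ * g) ≤ 1 := by
  obtain ⟨hXH, hXcl⟩ := hX
  have hgen : Subgroup.closure (X ∪ Y) = ⊤ := by
    rw [eq_top_iff]
    intro g _
    obtain ⟨y, ⟨hyY, hyH⟩, _⟩ := hY g
    have h1 : g * y⁻¹ ∈ Subgroup.closure (X ∪ Y) := by
      have hmem : g * y⁻¹ ∈ Subgroup.closure X := by rw [hXcl]; exact hyH
      exact Subgroup.closure_mono Set.subset_union_left hmem
    have h2 : y ∈ Subgroup.closure (X ∪ Y) :=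
      Subgroup.subset_closure (Or.inr hyY)
    simpa using mul_mem h1 h2
  refine ⟨hgen, ?_, ?_⟩
  · intro h hH
    constructor
    · obtain ⟨l, hl, hlen, hp⟩ := exists_min_list (S := X) (by rw [hXcl]; exact hH)
      have := wlen_le_of_list (S := X ∪ Y) l
        (fun a ha => by rcases hl a ha with h' | h'; exacts [Or.inl (Or.inl h'), Or.inr (Or.inl h')]) hp
      omega
    · obtain ⟨l, hl, hlen, hp⟩ := exists_min_list (S := X ∪ Y) (g := h)
        (by rw [hgen]; trivial)
      have hkey := key_lemma hNor hXH hXcl hY h1Y hL hN l hl 1 h1Y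
        (by rw [one_mul, hp]; exact hH)
      rw [one_mul, hp, hlen] at hkey
      exact hkey
  · intro g
    obtain ⟨y, ⟨hyY, hyH⟩, _⟩ := hY g
    refine ⟨g * y⁻¹, hyH, ?_⟩
    have heq : (g * y⁻¹)⁻¹ * g = y := by group
    rw [heq]
    simpa using wlen_le_of_list (S := X ∪ Y) [y] (by simp [hyY]) (by simp)


end Paper
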